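/- arXiv:2012.01374 — 2 statements merged into one kernel-verified Lean document; each statement's English description precedes it below -/
import Mathlib

section
/- Let G be a finite non-abelian group, H a subgroup of G with H ≠ Z(H,G), and g ∈ K(H,G) with g ≠ 1 and g² ≠ 1. Let x ∈ G \ H. (i) If exactly one of the two statements 'there exists h ∈ H with h⁻¹xh = xg' and 'there exists h ∈ H with h⁻¹xh = xg⁻¹' holds, then the degree of x in Δ_{H,G}^g equals |H| - |Z(H,G)| - |C_H(x)|. (ii) If both statements hold, then the degree of x in Δ_{H,G}^g equals |H| - |Z(H,G)| - 2|C_H(x)|. -/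
open SimpleGraph

/-- `Z(H,G)`: the set of elements of `H` commuting with every element of `G`. -/
def relCenter (G : Type*) [Group G] (H : Subgroup G) : Set G :=
  {x : G | x ∈ H ∧ ∀ y : G, x * y = y * x}

/-- The commutator `[x,y] = x⁻¹y⁻¹xy`. -/
def comm' {G : Type*} [Group G] (x y : G) : G :=
  x⁻¹ * y⁻¹ * x * y

lemma comm'_swap {G : Type*} [Group G] (x y : G) :
    comm' y x = (comm' x y)⁻¹ := by
  simp only [comm', mul_inv_rev, inv_inv, mul_assoc]

/-- `K(H,G) = {[x,y] : x ∈ H, y ∈ G}`. -/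
def relComm (G : Type*) [Group G] (H : Subgroup G) : Set G :=
  {w : G | ∃ x ∈ H, ∃ y : G, comm' x y = w}

/-- The graph `Δ_{H,G}^g`: vertices are the elements of `G \ Z(H,G)`, and two distinct
vertices `x`, `y` are adjacent iff (`x ∈ H` or `y ∈ H`) and `[x,y] ≠ g, g⁻¹`. -/
def gnc (G : Type*) [Group G] (H : Subgroup G) (g : G) :
    SimpleGraph (((relCenter G H)ᶜ : Set G)) where
  Adj x y := x ≠ y ∧ ((x : G) ∈ H ∨ (y : G) ∈ H) ∧
    comm' (x : G) (y : G) ≠ g ∧ comm' (x : G) (y : G) ≠ g⁻¹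
  symm := by
    refine ⟨?_⟩
    rintro x y ⟨hxy, hH, h1, h2⟩
    refine ⟨fun h => hxy h.symm, hH.symm, ?_, ?_⟩
    · rw [comm'_swap, ne_eq, inv_eq_iff_eq_inv]
      exact h2
    · rw [comm'_swap, ne_eq, inv_eq_iff_eq_inv, inv_inv]
      exact h1
  loopless := by
    refine ⟨?_⟩
    rintro x ⟨h, -⟩
    exact h rfl

/-- `C_H(x) = {h ∈ H : hx = xh}`. -/
def cH {G : Type*} [Group G] (H : Subgroup G) (x : G) : Set G :=
  {h : G | h ∈ H ∧ h * x = x * h}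

open scoped Classical in
/-- degree of a vertex `x ∈ G \ H` when `g ≠ 1`, `g² ≠ 1`. -/
theorem stmt4 {G : Type*} [Group G] [Fintype G]
    (hna : ∃ x y : G, x * y ≠ y * x)
    (H : Subgroup G) (hH : (H : Set G) ≠ relCenter G H)
    (g : G) (hgK : g ∈ relComm G H) (hg1 : g ≠ 1) (hg2 : g ^ 2 ≠ 1)
    (x : G) (hxH : x ∉ H) :
    ((((∃ h ∈ H, h⁻¹ * x * h = x * g) ∧ ¬ (∃ h ∈ H, h⁻¹ * x * h = x * g⁻¹)) ∨
      ((¬ ∃ h ∈ H, h⁻¹ * x * h = x * g) ∧ (∃ h ∈ H, h⁻¹ * x * h = x * g⁻¹))) →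
      (gnc G H g).degree ⟨x, by exact fun h => hxH h.1⟩
        = Nat.card H - Nat.card (relCenter G H) - Nat.card (cH H x)) ∧
    (((∃ h ∈ H, h⁻¹ * x * h = x * g) ∧ (∃ h ∈ H, h⁻¹ * x * h = x * g⁻¹)) →
      (gnc G H g).degree ⟨x, by exact fun h => hxH h.1⟩
        = Nat.card H - Nat.card (relCenter G H) - 2 * Nat.card (cH H x)) := by
  classical
  have hciff : ∀ (w h : G), comm' x h = w ↔ h⁻¹ * x * h = x * w := by
    intro w h
    rw [comm']
    constructor
    · intro e; rw [← e]; group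
    · intro e
      have e2 : x⁻¹ * h⁻¹ * x * h = x⁻¹ * (h⁻¹ * x * h) := by group
      rw [e2, e]; group
  set C : Finset G := Finset.univ.filter (fun y => y ∈ cH H x) with hCdef
  set ZF : Finset G := Finset.univ.filter (fun y => y ∈ relCenter G H) with hZdef
  set HF : Finset G := Finset.univ.filter (fun y => y ∈ H) with hHdef
  set A : Finset G := Finset.univ.filter (fun y => y ∈ H ∧ comm' x y = g) with hAdef
  set B : Finset G := Finset.univ.filter (fun y => y ∈ H ∧ comm' x y = g⁻¹) with hBdef
  set S : Finset G := Finset.univ.filter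
    (fun y => y ∈ H ∧ y ∉ relCenter G H ∧ comm' x y ≠ g ∧ comm' x y ≠ g⁻¹) with hSdef
  -- degrees
  have hdeg : (gnc G H g).degree ⟨x, by exact fun h => hxH h.1⟩ = S.card := by
    rw [← SimpleGraph.card_neighborFinset_eq_degree]
    refine Finset.card_nbij Subtype.val ?_ ?_ ?_
    · intro a ha
      rw [Finset.mem_coe, SimpleGraph.mem_neighborFinset] at ha
      obtain ⟨hne, hor, h1, h2⟩ := ha
      have haH : (a : G) ∈ H := by
        rcases hor with h | h
        · exact absurd h hxH
        · exact h
      simp only [hSdef, Finset.mem_coe, Finset.mem_filter, Finset.mem_univ, true_and]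
      exact ⟨haH, a.2, h1, h2⟩
    · intro a _ b _ hab
      exact Subtype.ext hab
    · intro y hy
      simp only [hSdef, Finset.coe_filter, Finset.mem_coe, Finset.mem_univ, true_and,
        Set.mem_setOf_eq] at hy
      obtain ⟨hyH, hyZ, h1, h2⟩ := hy
      refine ⟨⟨y, hyZ⟩, ?_, rfl⟩
      rw [Finset.mem_coe, SimpleGraph.mem_neighborFinset]
      refine ⟨?_, Or.inr hyH, h1, h2⟩
      intro h
      apply hxH
      have : x = y := congrArg Subtype.val h
      rw [this]; exact hyH
  -- cardinalities
  have hcardH : Nat.card H = HF.card := by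
    rw [Nat.card_eq_fintype_card, hHdef, ← Fintype.card_subtype]
  have hcardZ : Nat.card (relCenter G H) = ZF.card := by
    rw [Nat.card_eq_fintype_card, hZdef, ← Fintype.card_subtype]
  have hcardC : Nat.card (cH H x) = C.card := by
    rw [Nat.card_eq_fintype_card, hCdef, ← Fintype.card_subtype]
  -- disjointness and inclusions
  have hZ1 : ∀ z ∈ relCenter G H, comm' x z = 1 := by
    intro z hz
    have hzx : z * x = x * z := hz.2 x
    rw [comm', mul_assoc, ← hzx]
    group
  have hZA : Disjoint ZF A := by
    rw [Finset.disjoint_left]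
    intro z hz ha
    simp only [hZdef, hAdef, Finset.mem_filter, Finset.mem_univ, true_and] at hz ha
    exact hg1 ((hZ1 z hz) ▸ ha.2.symm)
  have hZB : Disjoint ZF B := by
    rw [Finset.disjoint_left]
    intro z hz hb
    simp only [hZdef, hBdef, Finset.mem_filter, Finset.mem_univ, true_and] at hz hb
    apply hg1
    have : g⁻¹ = 1 := (hZ1 z hz) ▸ hb.2.symm
    rw [← inv_inv g, this, inv_one]
  have hAB : Disjoint A B := by
    rw [Finset.disjoint_left]
    intro a haA haB
    simp only [hAdef, hBdef, Finset.mem_filter, Finset.mem_univ, true_and] at haA haB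
    have : g = g⁻¹ := haA.2 ▸ haB.2
    apply hg2
    rw [pow_two]
    nth_rewrite 2 [this]
    group
  have hZH : ZF ⊆ HF := by
    intro z hz
    simp only [hZdef, hHdef, Finset.mem_filter, Finset.mem_univ, true_and] at hz ⊢
    exact hz.1
  have hAH : A ⊆ HF := by
    intro z hz
    simp only [hAdef, hHdef, Finset.mem_filter, Finset.mem_univ, true_and] at hz ⊢
    exact hz.1
  have hBH : B ⊆ HF := by
    intro z hz
    simp only [hBdef, hHdef, Finset.mem_filter, Finset.mem_univ, true_and] at hz ⊢
    exact hz.1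
  -- S = HF \ (ZF ∪ A ∪ B)
  have hSeq : S = HF \ (ZF ∪ A ∪ B) := by
    ext y
    simp only [hSdef, hHdef, hZdef, hAdef, hBdef, Finset.mem_sdiff, Finset.mem_union,
      Finset.mem_filter, Finset.mem_univ, true_and]
    tauto
  have hScard : S.card = HF.card - ZF.card - (A.card + B.card) := by
    rw [hSeq, Finset.card_sdiff_of_subset (by
      intro y hy
      rcases Finset.mem_union.mp hy with h | h
      · rcases Finset.mem_union.mp h with h | h
        · exact hZH h
        · exact hAH h
      · exact hBH h)]
    rw [Finset.card_union_of_disjoint (by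
        rw [Finset.disjoint_union_left]; exact ⟨hZB, hAB⟩),
      Finset.card_union_of_disjoint hZA, Nat.sub_sub, Nat.add_assoc]
  -- card of A / B in the nonempty / empty cases
  have key : ∀ w : G,
      ((∃ h ∈ H, h⁻¹ * x * h = x * w) →
        (Finset.univ.filter (fun y => y ∈ H ∧ comm' x y = w)).card = C.card) ∧
      (¬ (∃ h ∈ H, h⁻¹ * x * h = x * w) →
        (Finset.univ.filter (fun y => y ∈ H ∧ comm' x y = w)).card = 0) := by
    intro w
    constructor
    · rintro ⟨h₀, h₀H, h₀e⟩
      have himg : Finset.univ.filter (fun y => y ∈ H ∧ comm' x y = w)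
          = C.image (· * h₀) := by
        ext y
        simp only [hCdef, Finset.mem_image, Finset.mem_filter, Finset.mem_univ, true_and, cH,
          Set.mem_setOf_eq]
        constructor
        · rintro ⟨yH, hy⟩
          have hy2 : y⁻¹ * x * y = x * w := (hciff w y).mp hy
          have e : y⁻¹ * x * y = h₀⁻¹ * x * h₀ := hy2.trans h₀e.symm
          refine ⟨y * h₀⁻¹, ⟨⟨mul_mem yH (inv_mem h₀H), ?_⟩, by group⟩⟩
          calc y * h₀⁻¹ * x = y * (h₀⁻¹ * x * h₀) * h₀⁻¹ := by group
            _ = y * (y⁻¹ * x * y) * h₀⁻¹ := by rw [e]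
            _ = x * (y * h₀⁻¹) := by group
        · rintro ⟨c, ⟨⟨cHm, cx⟩, rfl⟩⟩
          refine ⟨mul_mem cHm h₀H, (hciff w (c * h₀)).mpr ?_⟩
          have cx' : c⁻¹ * x * c = x := by
            rw [mul_assoc, ← cx]; group
          calc (c * h₀)⁻¹ * x * (c * h₀) = h₀⁻¹ * (c⁻¹ * x * c) * h₀ := by group
            _ = h₀⁻¹ * x * h₀ := by rw [cx']
            _ = x * w := h₀e
      rw [himg, Finset.card_image_of_injective _ (mul_left_injective h₀)]
    · intro hne
      rw [Finset.card_eq_zero]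
      ext y
      simp only [Finset.mem_filter, Finset.mem_univ, true_and, Finset.notMem_empty, iff_false,
        not_and]
      intro yH hy
      exact hne ⟨y, yH, (hciff w y).mp hy⟩
  constructor
  · rintro (⟨hg, hginv⟩ | ⟨hg, hginv⟩)
    · have hA : A.card = C.card := by rw [hAdef]; exact (key g).1 hg
      have hB : B.card = 0 := by rw [hBdef]; exact (key g⁻¹).2 hginv
      rw [hdeg, hScard, hA, hB, hcardH, hcardZ, hcardC]
      omega
    · have hA : A.card = 0 := by rw [hAdef]; exact (key g).2 hg
      have hB : B.card = C.card := by rw [hBdef]; exact (key g⁻¹).1 hginv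
      rw [hdeg, hScard, hA, hB, hcardH, hcardZ, hcardC]
      omega
  · rintro ⟨hg, hginv⟩
    have hA : A.card = C.card := by rw [hAdef]; exact (key g).1 hg
    have hB : B.card = C.card := by rw [hBdef]; exact (key g⁻¹).1 hginv
    rw [hdeg, hScard, hA, hB, hcardH, hcardZ, hcardC]
    omega
end

section
/- Let n ≥ 5 be odd and G = D_{2n} the dihedral group of order 2n. (a) If H = ⟨a⟩ and g ∈ ⟨a⟩, then the graph Δ_{H,G}^g is connected and its diameter equals 2. (b) If H = ⟨a^r b⟩ = {1, a^r b} for some 1 ≤ r ≤ n and g ∈ ⟨a⟩, then Δ_{H,G}^g is connected with diameter equal to 2 when g = 1, and Δ_{H,G}^g is not connected when g ≠ 1. -/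
open SimpleGraph

namespace Aux19
open DihedralGroup

variable {n : ℕ}

lemma inv_r (i : ZMod n) : (r i : DihedralGroup n)⁻¹ = r (-i) :=
  inv_eq_of_mul_eq_one_right (by rw [r_mul_r, add_neg_cancel, one_def])

lemma inv_sr (i : ZMod n) : (sr i : DihedralGroup n)⁻¹ = sr i :=
  inv_eq_of_mul_eq_one_right (sr_mul_self i)

lemma comm'_rr (i j : ZMod n) : comm' (r i : DihedralGroup n) (r j) = 1 := by
  simp only [comm', inv_r, r_mul_r]
  rw [show -i + -j + i + j = 0 by ring, ← one_def]

lemma comm'_rsr (i j : ZMod n) : comm' (r i : DihedralGroup n) (sr j) = r (-(2*i)) := by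
  simp only [comm', inv_r, inv_sr, r_mul_sr, sr_mul_r, sr_mul_sr]
  congr 1; ring

lemma comm'_srr (i j : ZMod n) : comm' (sr i : DihedralGroup n) (r j) = r (2*j) := by
  simp only [comm', inv_r, inv_sr, sr_mul_r, sr_mul_sr, r_mul_r]
  congr 1; ring

lemma comm'_srsr (i j : ZMod n) : comm' (sr i : DihedralGroup n) (sr j) = r (2*(j-i)) := by
  simp only [comm', inv_sr, sr_mul_sr, r_mul_sr]
  congr 1; ring

lemma r_one_zpow (k : ℤ) : (r 1 : DihedralGroup n) ^ k = r (k : ZMod n) := by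
  cases k with
  | ofNat m =>
      rw [Int.ofNat_eq_coe, zpow_natCast, r_one_pow]
      norm_cast
  | negSucc m =>
      rw [zpow_negSucc, r_one_pow, inv_r]
      congr 1
      simp [Int.negSucc_eq]

lemma mem_zr [NeZero n] (x : DihedralGroup n) :
    x ∈ Subgroup.zpowers (r 1 : DihedralGroup n) ↔ ∃ i, x = r i := by
  rw [Subgroup.mem_zpowers_iff]
  constructor
  · rintro ⟨k, rfl⟩; exact ⟨k, by rw [r_one_zpow]⟩
  · rintro ⟨i, rfl⟩
    exact ⟨(i.val : ℤ), by rw [r_one_zpow]; norm_cast; simp [ZMod.natCast_val, ZMod.cast_id]⟩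

lemma mem_zsr (c : ZMod n) (x : DihedralGroup n) :
    x ∈ Subgroup.zpowers (sr c : DihedralGroup n) ↔ x = 1 ∨ x = sr c := by
  constructor
  · rintro hx
    obtain ⟨k, rfl⟩ := Subgroup.mem_zpowers_iff.mp hx
    have hsq : (sr c : DihedralGroup n) ^ (2:ℤ) = 1 := by rw [zpow_two, sr_mul_self]
    have hk : k = 2 * (k / 2) + k % 2 := (Int.mul_ediv_add_emod k 2).symm
    rw [hk, zpow_add, zpow_mul, hsq, one_zpow, one_mul]
    rcases Int.emod_two_eq_zero_or_one k with h | h <;> rw [h]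
    · left; exact zpow_zero _
    · right; exact zpow_one _
  · rintro (rfl | rfl)
    · exact one_mem _
    · exact Subgroup.mem_zpowers _

lemma isUnit_two (hodd : Odd n) : IsUnit (2 : ZMod n) := by
  refine ⟨ZMod.unitOfCoprime 2 (Nat.coprime_two_left.mpr hodd), ?_⟩
  simp [ZMod.coe_unitOfCoprime]

lemma two_cancel (hodd : Odd n) {x y : ZMod n} (h : 2 * x = 2 * y) : x = y :=
  (isUnit_two hodd).mul_right_injective h

lemma two_surj (hodd : Odd n) (z : ZMod n) : ∃ i : ZMod n, 2 * i = z := by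
  obtain ⟨u, hu⟩ := isUnit_two hodd
  exact ⟨↑u⁻¹ * z, by rw [← hu, ← mul_assoc, Units.mul_inv, one_mul]⟩

lemma two_mul_ne_zero (hodd : Odd n) {i : ZMod n} (hi : i ≠ 0) : 2 * i ≠ 0 := fun h =>
  hi (two_cancel hodd (by rw [h, mul_zero]))

lemma memVa (hn : 5 ≤ n) (hodd : Odd n) (x : DihedralGroup n) :
    x ∈ (relCenter (DihedralGroup n) (Subgroup.zpowers (r 1 : DihedralGroup n)))ᶜ ↔ x ≠ 1 := by
  haveI : NeZero n := ⟨by omega⟩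
  simp only [Set.mem_compl_iff, relCenter, Set.mem_setOf_eq, not_and, ne_eq]
  constructor
  · intro h hx
    subst hx
    exact (h (one_mem _)) fun y => by rw [one_mul, mul_one]
  · intro hx hH hc
    obtain ⟨i, rfl⟩ := (mem_zr _).mp hH
    have h0 := hc (sr 0)
    rw [r_mul_sr, sr_mul_r] at h0
    have h1 : (0 : ZMod n) - i = 0 + i := by injection h0
    rw [zero_sub, zero_add] at h1
    have hi : i = 0 := by
      refine two_cancel hodd (x := i) (y := 0) ?_
      rw [mul_zero, two_mul]
      nth_rewrite 1 [← h1]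
      rw [neg_add_cancel]
    exact hx (by rw [hi, ← one_def])

lemma memVb (hn : 5 ≤ n) (hodd : Odd n) (c : ZMod n) (x : DihedralGroup n) :
    x ∈ (relCenter (DihedralGroup n) (Subgroup.zpowers (sr c : DihedralGroup n)))ᶜ ↔ x ≠ 1 := by
  haveI : Fact (1 < n) := ⟨by omega⟩
  simp only [Set.mem_compl_iff, relCenter, Set.mem_setOf_eq, not_and, ne_eq]
  constructor
  · intro h hx
    subst hx
    exact (h (one_mem _)) fun y => by rw [one_mul, mul_one]
  · intro hx hH hc
    rcases (mem_zsr c x).mp hH with rfl | rfl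
    · exact hx rfl
    · have h1 := hc (r 1)
      rw [sr_mul_r, r_mul_sr] at h1
      have h2 : c + 1 = c - 1 := by injection h1
      have h3 : (2 : ZMod n) = 0 := by linear_combination h2
      exact one_ne_zero (two_cancel hodd (by rw [mul_one, mul_zero]; exact h3))

lemma gnc_adj {G : Type*} [Group G] {H : Subgroup G} {g : G}
    {x y : ((relCenter G H)ᶜ : Set G)} :
    (gnc G H g).Adj x y ↔ x ≠ y ∧ ((x : G) ∈ H ∨ (y : G) ∈ H) ∧
      comm' (x : G) (y : G) ≠ g ∧ comm' (x : G) (y : G) ≠ g⁻¹ := Iff.rfl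

lemma edist_le_two_of {V : Type*} (G : SimpleGraph V) {u v w : V}
    (h1 : G.Adj u w) (h2 : G.Adj w v) : G.edist u v ≤ 2 := by
  have := G.edist_le (SimpleGraph.Walk.cons h1 (SimpleGraph.Walk.cons h2 SimpleGraph.Walk.nil))
  simpa using this

lemma edist_le_two_of_adj {V : Type*} {G : SimpleGraph V} {u v : V}
    (h : G.Adj u v) : G.edist u v ≤ 2 := by
  rw [SimpleGraph.edist_eq_one_iff_adj.mpr h]
  norm_num

lemma conn_diam_two {V : Type*} [Nonempty V] (G : SimpleGraph V)
    (h2 : ∀ u v : V, G.edist u v ≤ 2) {u₀ v₀ : V} (hne : u₀ ≠ v₀) (hnadj : ¬ G.Adj u₀ v₀) :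
    G.Connected ∧ G.diam = 2 := by
  have hpre : G.Preconnected := fun u v =>
    SimpleGraph.reachable_of_edist_ne_top
      (ne_top_of_le_ne_top (by simp) (h2 u v))
  have hed : G.ediam = 2 := by
    refine le_antisymm (SimpleGraph.ediam_le_of_edist_le h2) ?_
    have h0 : G.edist u₀ v₀ ≠ 0 := by
      rw [ne_eq, SimpleGraph.edist_eq_zero_iff]
      exact hne
    have h1 : G.edist u₀ v₀ ≠ 1 := fun h => hnadj (SimpleGraph.edist_eq_one_iff_adj.mp h)
    have hlt : 1 < G.edist u₀ v₀ :=
      lt_of_le_of_ne (ENat.one_le_iff_ne_zero.mpr h0) (Ne.symm h1)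
    exact le_trans (Order.add_one_le_of_lt hlt) SimpleGraph.edist_le_ediam
  refine ⟨⟨hpre⟩, ?_⟩
  have hd : G.diam = G.ediam.toNat := rfl
  rw [hd, hed]
  rfl

lemma not_connected_of_isolated {V : Type*} (G : SimpleGraph V) {u v : V} (hne : u ≠ v)
    (hiso : ∀ w, ¬ G.Adj u w) : ¬ G.Connected := by
  intro h
  obtain ⟨p⟩ := h.preconnected u v
  cases p with
  | nil => exact hne rfl
  | cons h q => exact hiso _ h

end Aux19

namespace Aux19
open DihedralGroup

lemma partA (n : ℕ) (hn : 5 ≤ n) (hodd : Odd n) (g : DihedralGroup n)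
    (hg : g ∈ Subgroup.zpowers (DihedralGroup.r 1 : DihedralGroup n)) :
    (gnc (DihedralGroup n) (Subgroup.zpowers (DihedralGroup.r 1 : DihedralGroup n)) g).Connected ∧
    (gnc (DihedralGroup n) (Subgroup.zpowers (DihedralGroup.r 1 : DihedralGroup n)) g).diam = 2 := by
  haveI : NeZero n := ⟨by omega⟩
  haveI : Fact (1 < n) := ⟨by omega⟩
  have hV := memVa hn hodd
  obtain ⟨k, rfl⟩ := (mem_zr g).mp hg
  set G' := gnc (DihedralGroup n) (Subgroup.zpowers (r 1 : DihedralGroup n)) (r k) with hG'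
  have h10 : (1 : ZMod n) ≠ 0 := one_ne_zero
  have h20 : (2 : ZMod n) ≠ 0 := by
    have := two_mul_ne_zero hodd h10; rwa [mul_one] at this
  have h12 : (1 : ZMod n) ≠ 2 := fun h => h10 (by linear_combination -h)
  have hvr : ∀ i : ZMod n, i ≠ 0 →
      (r i : DihedralGroup n) ∈ (relCenter (DihedralGroup n)
        (Subgroup.zpowers (r 1 : DihedralGroup n)))ᶜ := by
    intro i hi
    refine (hV _).mpr ?_
    rw [one_def]
    intro h; injection h with h'; exact hi h'
  have hvs : ∀ j : ZMod n,
      (sr j : DihedralGroup n) ∈ (relCenter (DihedralGroup n)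
        (Subgroup.zpowers (r 1 : DihedralGroup n)))ᶜ := by
    intro j
    refine (hV _).mpr ?_
    rw [one_def]
    exact fun h => by cases h
  haveI : Nonempty (((relCenter (DihedralGroup n)
      (Subgroup.zpowers (r 1 : DihedralGroup n)))ᶜ : Set (DihedralGroup n))) :=
    ⟨⟨r 1, hvr 1 h10⟩⟩
  have adjRR : ∀ (i j : ZMod n), i ≠ j → k ≠ 0 → ∀ h1 h2,
      G'.Adj ⟨r i, h1⟩ ⟨r j, h2⟩ := by
    intro i j hij hk h1 h2
    refine gnc_adj.mpr ⟨?_, Or.inl ((mem_zr _).mpr ⟨i, rfl⟩), ?_, ?_⟩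
    · intro h
      have := congrArg Subtype.val h
      injection this with h'
      exact hij h'
    · rw [comm'_rr, one_def]
      simp only [ne_eq, DihedralGroup.r.injEq]
      exact fun h => hk h.symm
    · rw [comm'_rr, inv_r, one_def]
      simp only [ne_eq, DihedralGroup.r.injEq]
      exact fun h => hk (neg_eq_zero.mp h.symm)
  have adjRS : ∀ (i j : ZMod n), -(2*i) ≠ k → -(2*i) ≠ -k → ∀ h1 h2,
      G'.Adj ⟨r i, h1⟩ ⟨sr j, h2⟩ := by
    intro i j hc1 hc2 h1 h2
    refine gnc_adj.mpr ⟨?_, Or.inl ((mem_zr _).mpr ⟨i, rfl⟩), ?_, ?_⟩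
    · intro h
      simpa using congrArg Subtype.val h
    · rw [comm'_rsr]
      simp only [ne_eq, DihedralGroup.r.injEq]
      exact hc1
    · rw [comm'_rsr, inv_r]
      simp only [ne_eq, DihedralGroup.r.injEq]
      exact hc2
  by_cases hk : k = 0
  · subst hk
    have h2 : ∀ u v, G'.edist u v ≤ 2 := by
      rintro ⟨x, hx⟩ ⟨y, hy⟩
      by_cases hxy : x = y
      · subst hxy
        have hve : (⟨x, hx⟩ : ((relCenter (DihedralGroup n)
            (Subgroup.zpowers (r 1 : DihedralGroup n)))ᶜ : Set (DihedralGroup n))) = ⟨x, hy⟩ :=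
          Subtype.ext rfl
        rw [hve, SimpleGraph.edist_self]
        norm_num
      have hx1 : x ≠ 1 := (hV x).mp hx
      have hy1 : y ≠ 1 := (hV y).mp hy
      cases x with
      | r i =>
        have hi : i ≠ 0 := fun h => hx1 (by rw [h, ← one_def])
        have hci1 : -(2*i) ≠ (0 : ZMod n) := by
          rw [ne_eq, neg_eq_zero]; exact two_mul_ne_zero hodd hi
        have hci2 : -(2*i) ≠ -(0 : ZMod n) := by rwa [neg_zero]
        cases y with
        | r j =>
          have hj : j ≠ 0 := fun h => hy1 (by rw [h, ← one_def])
          have hcj1 : -(2*j) ≠ (0 : ZMod n) := by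
            rw [ne_eq, neg_eq_zero]; exact two_mul_ne_zero hodd hj
          have hcj2 : -(2*j) ≠ -(0 : ZMod n) := by rwa [neg_zero]
          exact edist_le_two_of _ (adjRS i 0 hci1 hci2 hx (hvs 0))
            ((adjRS j 0 hcj1 hcj2 hy (hvs 0)).symm)
        | sr j =>
          exact edist_le_two_of_adj (adjRS i j hci1 hci2 hx hy)
      | sr i =>
        cases y with
        | r j =>
          have hj : j ≠ 0 := fun h => hy1 (by rw [h, ← one_def])
          have hcj1 : -(2*j) ≠ (0 : ZMod n) := by
            rw [ne_eq, neg_eq_zero]; exact two_mul_ne_zero hodd hj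
          have hcj2 : -(2*j) ≠ -(0 : ZMod n) := by rwa [neg_zero]
          exact edist_le_two_of_adj ((adjRS j i hcj1 hcj2 hy hx).symm)
        | sr j =>
          have hc1 : -(2*(1:ZMod n)) ≠ (0 : ZMod n) := by
            rw [ne_eq, neg_eq_zero]; exact two_mul_ne_zero hodd h10
          have hc2 : -(2*(1:ZMod n)) ≠ -(0 : ZMod n) := by rwa [neg_zero]
          exact edist_le_two_of _ ((adjRS 1 i hc1 hc2 (hvr 1 h10) hx).symm)
            (adjRS 1 j hc1 hc2 (hvr 1 h10) hy)
    refine conn_diam_two G' h2 (u₀ := ⟨r 1, hvr 1 h10⟩) (v₀ := ⟨r 2, hvr 2 h20⟩) ?_ ?_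
    · intro h
      have := congrArg Subtype.val h
      injection this with h'
      exact h12 h'
    · intro hadj
      obtain ⟨-, -, h3, -⟩ := gnc_adj.mp hadj
      exact h3 (by rw [comm'_rr, one_def])
  · obtain ⟨z, hz0, hzk, hzk'⟩ : ∃ z : ZMod n, z ≠ 0 ∧ z ≠ k ∧ z ≠ -k := by
      by_contra hcon
      push_neg at hcon
      have hall : ∀ z : ZMod n, z ∈ ({0, k, -k} : Finset (ZMod n)) := by
        intro z
        simp only [Finset.mem_insert, Finset.mem_singleton]
        by_cases h1 : z = 0
        · exact Or.inl h1
        by_cases h2 : z = k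
        · exact Or.inr (Or.inl h2)
        exact Or.inr (Or.inr (hcon z h1 h2))
      have hcard3 : ({0, k, -k} : Finset (ZMod n)).card ≤ 3 := by
        refine le_trans (Finset.card_insert_le _ _) ?_
        have := Finset.card_insert_le k ({-k} : Finset (ZMod n))
        simp only [Finset.card_singleton] at this
        omega
      have huniv : ({0, k, -k} : Finset (ZMod n)) = Finset.univ :=
        Finset.eq_univ_iff_forall.mpr hall
      rw [huniv, Finset.card_univ, ZMod.card] at hcard3
      omega
    obtain ⟨i₀, hi₀⟩ := two_surj hodd z
    have hi₀0 : i₀ ≠ 0 := fun h => hz0 (by rw [← hi₀, h, mul_zero])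
    have hc1 : -(2*i₀) ≠ k := by
      rw [hi₀]; exact fun h => hzk' (neg_eq_iff_eq_neg.mp h)
    have hc2 : -(2*i₀) ≠ -k := by
      rw [hi₀]; exact fun h => hzk (neg_injective h)
    have h2 : ∀ u v, G'.edist u v ≤ 2 := by
      rintro ⟨x, hx⟩ ⟨y, hy⟩
      by_cases hxy : x = y
      · subst hxy
        have hve : (⟨x, hx⟩ : ((relCenter (DihedralGroup n)
            (Subgroup.zpowers (r 1 : DihedralGroup n)))ᶜ : Set (DihedralGroup n))) = ⟨x, hy⟩ :=
          Subtype.ext rfl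
        rw [hve, SimpleGraph.edist_self]
        norm_num
      cases x with
      | r i =>
        cases y with
        | r j =>
          have hij : i ≠ j := fun h => hxy (by rw [h])
          exact edist_le_two_of_adj (adjRR i j hij hk hx hy)
        | sr j =>
          by_cases him : i = i₀
          · subst him
            exact edist_le_two_of_adj (adjRS i j hc1 hc2 hx hy)
          · exact edist_le_two_of _ (adjRR i i₀ him hk hx (hvr i₀ hi₀0))
              (adjRS i₀ j hc1 hc2 (hvr i₀ hi₀0) hy)
      | sr i =>
        cases y with
        | r j =>
          by_cases hjm : j = i₀
          · subst hjm
            exact edist_le_two_of_adj ((adjRS j i hc1 hc2 hy hx).symm)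
          · exact edist_le_two_of _ ((adjRS i₀ i hc1 hc2 (hvr i₀ hi₀0) hx).symm)
              ((adjRR j i₀ hjm hk hy (hvr i₀ hi₀0)).symm)
        | sr j =>
          exact edist_le_two_of _ ((adjRS i₀ i hc1 hc2 (hvr i₀ hi₀0) hx).symm)
            (adjRS i₀ j hc1 hc2 (hvr i₀ hi₀0) hy)
    refine conn_diam_two G' h2 (u₀ := ⟨sr 0, hvs 0⟩) (v₀ := ⟨sr 1, hvs 1⟩) ?_ ?_
    · intro h
      have := congrArg Subtype.val h
      injection this with h'
      exact h10 h'.symm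
    · intro hadj
      obtain ⟨-, hmem, -, -⟩ := gnc_adj.mp hadj
      rcases hmem with hmem | hmem
      · obtain ⟨i, h⟩ := (mem_zr _).mp hmem
        simp at h
      · obtain ⟨i, h⟩ := (mem_zr _).mp hmem
        simp at h

lemma partB1 (n : ℕ) (hn : 5 ≤ n) (hodd : Odd n) (c : ZMod n) :
    (gnc (DihedralGroup n) (Subgroup.zpowers (DihedralGroup.sr c : DihedralGroup n)) 1).Connected ∧
    (gnc (DihedralGroup n) (Subgroup.zpowers (DihedralGroup.sr c : DihedralGroup n)) 1).diam = 2 := by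
  haveI : NeZero n := ⟨by omega⟩
  haveI : Fact (1 < n) := ⟨by omega⟩
  have hV := memVb hn hodd c
  set G' := gnc (DihedralGroup n) (Subgroup.zpowers (sr c : DihedralGroup n)) 1 with hG'
  have h10 : (1 : ZMod n) ≠ 0 := one_ne_zero
  have h20 : (2 : ZMod n) ≠ 0 := by
    have := two_mul_ne_zero hodd h10; rwa [mul_one] at this
  have h12 : (1 : ZMod n) ≠ 2 := fun h => h10 (by linear_combination -h)
  have hvr : ∀ i : ZMod n, i ≠ 0 →
      (r i : DihedralGroup n) ∈ (relCenter (DihedralGroup n)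
        (Subgroup.zpowers (sr c : DihedralGroup n)))ᶜ := by
    intro i hi
    refine (hV _).mpr ?_
    rw [one_def]
    intro h; injection h with h'; exact hi h'
  have hvc : (sr c : DihedralGroup n) ∈ (relCenter (DihedralGroup n)
      (Subgroup.zpowers (sr c : DihedralGroup n)))ᶜ := by
    refine (hV _).mpr ?_
    rw [one_def]
    exact fun h => by cases h
  haveI : Nonempty (((relCenter (DihedralGroup n)
      (Subgroup.zpowers (sr c : DihedralGroup n)))ᶜ : Set (DihedralGroup n))) :=
    ⟨⟨sr c, hvc⟩⟩
  have adjHub : ∀ (x : DihedralGroup n) (hx : x ∈ (relCenter (DihedralGroup n)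
      (Subgroup.zpowers (sr c : DihedralGroup n)))ᶜ), x ≠ sr c →
      G'.Adj ⟨sr c, hvc⟩ ⟨x, hx⟩ := by
    intro x hx hxc
    have hx1 : x ≠ 1 := (hV x).mp hx
    have hcomm : comm' (sr c : DihedralGroup n) x ≠ 1 := by
      cases x with
      | r i =>
        have hi : i ≠ 0 := fun h => hx1 (by rw [h, ← one_def])
        rw [comm'_srr, one_def]
        simp only [ne_eq, DihedralGroup.r.injEq]
        exact two_mul_ne_zero hodd hi
      | sr j =>
        have hj : j - c ≠ 0 := sub_ne_zero.mpr (fun h => hxc (by rw [h]))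
        rw [comm'_srsr, one_def]
        simp only [ne_eq, DihedralGroup.r.injEq]
        exact two_mul_ne_zero hodd hj
    refine gnc_adj.mpr ⟨?_, Or.inl ((mem_zsr c _).mpr (Or.inr rfl)), hcomm, ?_⟩
    · intro h
      exact hxc ((congrArg Subtype.val h).symm)
    · rw [inv_one]; exact hcomm
  have h2 : ∀ u v, G'.edist u v ≤ 2 := by
    rintro ⟨x, hx⟩ ⟨y, hy⟩
    by_cases hxy : x = y
    · subst hxy
      have hve : (⟨x, hx⟩ : ((relCenter (DihedralGroup n)
          (Subgroup.zpowers (sr c : DihedralGroup n)))ᶜ : Set (DihedralGroup n))) = ⟨x, hy⟩ :=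
        Subtype.ext rfl
      rw [hve, SimpleGraph.edist_self]
      norm_num
    by_cases hxc : x = sr c
    · subst hxc
      exact edist_le_two_of_adj (adjHub y hy (fun h => hxy h.symm))
    by_cases hyc : y = sr c
    · subst hyc
      exact edist_le_two_of_adj ((adjHub x hx hxc).symm)
    exact edist_le_two_of _ ((adjHub x hx hxc).symm) (adjHub y hy hyc)
  refine conn_diam_two G' h2 (u₀ := ⟨r 1, hvr 1 h10⟩) (v₀ := ⟨r 2, hvr 2 h20⟩) ?_ ?_
  · intro h
    have := congrArg Subtype.val h
    injection this with h'
    exact h12 h'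
  · intro hadj
    obtain ⟨-, hmem, -, -⟩ := gnc_adj.mp hadj
    rcases hmem with hmem | hmem
    · rcases (mem_zsr c _).mp hmem with h | h
      · rw [one_def] at h; injection h with h'; exact h10 h'
      · simp at h
    · rcases (mem_zsr c _).mp hmem with h | h
      · rw [one_def] at h; injection h with h'; exact h20 h'
      · simp at h

lemma partB2 (n : ℕ) (hn : 5 ≤ n) (hodd : Odd n) (c : ZMod n) (g : DihedralGroup n)
    (hg : g ∈ Subgroup.zpowers (DihedralGroup.r 1 : DihedralGroup n)) (hg1 : g ≠ 1) :
    ¬ (gnc (DihedralGroup n) (Subgroup.zpowers (DihedralGroup.sr c : DihedralGroup n)) g).Connected := by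
  haveI : NeZero n := ⟨by omega⟩
  haveI : Fact (1 < n) := ⟨by omega⟩
  have hV := memVb hn hodd c
  obtain ⟨k, rfl⟩ := (mem_zr g).mp hg
  have hk : k ≠ 0 := fun h => hg1 (by rw [h, ← one_def])
  obtain ⟨i₀, hi₀⟩ := two_surj hodd k
  have hi₀0 : i₀ ≠ 0 := fun h => hk (by rw [← hi₀, h, mul_zero])
  have hu : (r i₀ : DihedralGroup n) ∈ (relCenter (DihedralGroup n)
      (Subgroup.zpowers (sr c : DihedralGroup n)))ᶜ := by
    refine (hV _).mpr ?_
    rw [one_def]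
    intro h; injection h with h'; exact hi₀0 h'
  have hv : (sr c : DihedralGroup n) ∈ (relCenter (DihedralGroup n)
      (Subgroup.zpowers (sr c : DihedralGroup n)))ᶜ := by
    refine (hV _).mpr ?_
    rw [one_def]
    exact fun h => by cases h
  refine not_connected_of_isolated _ (u := ⟨r i₀, hu⟩) (v := ⟨sr c, hv⟩) ?_ ?_
  · intro h
    simpa using congrArg Subtype.val h
  · rintro ⟨y, hy⟩ hadj
    obtain ⟨hne, hmem, h3, h4⟩ := gnc_adj.mp hadj
    rcases hmem with hmem | hmem
    · rcases (mem_zsr c _).mp hmem with h | h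
      · rw [one_def] at h; injection h with h'; exact hi₀0 h'
      · simp at h
    · rcases (mem_zsr c _).mp hmem with rfl | rfl
      · exact ((hV _).mp hy) rfl
      · exact h4 (by rw [comm'_rsr, hi₀, inv_r])

end Aux19

/-- for odd `n ≥ 5` and `G = D_{2n}`:
(a) if `H = ⟨a⟩` and `g ∈ ⟨a⟩` then `Δ_{H,G}^g` is connected with diameter `2`;
(b) if `H = ⟨a^r b⟩` (`1 ≤ r ≤ n`) and `g ∈ ⟨a⟩` then `Δ_{H,G}^g` is connected with
diameter `2` when `g = 1`, and not connected when `g ≠ 1`. -/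
theorem stmt19 (n : ℕ) (hn : 5 ≤ n) (hodd : Odd n) :
    (∀ g ∈ Subgroup.zpowers (DihedralGroup.r 1 : DihedralGroup n),
      (gnc (DihedralGroup n) (Subgroup.zpowers (DihedralGroup.r 1 : DihedralGroup n)) g).Connected ∧
      (gnc (DihedralGroup n) (Subgroup.zpowers (DihedralGroup.r 1 : DihedralGroup n)) g).diam = 2) ∧
    (∀ r : ℕ, 1 ≤ r → r ≤ n → ∀ g ∈ Subgroup.zpowers (DihedralGroup.r 1 : DihedralGroup n),
      (g = 1 →
        (gnc (DihedralGroup n)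
          (Subgroup.zpowers ((DihedralGroup.r 1 : DihedralGroup n) ^ r * DihedralGroup.sr 0)) g).Connected ∧
        (gnc (DihedralGroup n)
          (Subgroup.zpowers ((DihedralGroup.r 1 : DihedralGroup n) ^ r * DihedralGroup.sr 0)) g).diam = 2) ∧
      (g ≠ 1 →
        ¬ (gnc (DihedralGroup n)
            (Subgroup.zpowers ((DihedralGroup.r 1 : DihedralGroup n) ^ r * DihedralGroup.sr 0)) g).Connected)) := by
  constructor
  · intro g hg
    exact Aux19.partA n hn hodd g hg
  · intro m hm1 hm2 g hg
    have hH : (DihedralGroup.r 1 : DihedralGroup n) ^ m * DihedralGroup.sr 0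
        = DihedralGroup.sr (-(m : ZMod n)) := by
      rw [DihedralGroup.r_one_pow, DihedralGroup.r_mul_sr, zero_sub]
    rw [hH]
    constructor
    · intro hg1
      subst hg1
      exact Aux19.partB1 n hn hodd _
    · intro hg1
      exact Aux19.partB2 n hn hodd _ g hg hg1
end
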